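/- Let T be a ν-tree and A ⊆ T a set of ascents of T. Then the multiset of roots {r(T,a) : a ∈ A} is linearly independent in ℝ^{n+1}. -/

import Mathlib

open scoped Classical

/-- Number of east steps (`false`) among the first `k` steps of the lattice path `ν`
(`true` = north step N, `false` = east step E). -/
def ecount (ν : List Bool) (k : ℕ) : ℕ := (ν.take k).count false

/-- Number of north steps (`true`) among the first `k` steps of `ν`. -/
def ncount (ν : List Bool) (k : ℕ) : ℕ := (ν.take k).count true

/-- The set `A_ν` of lattice points weakly above `ν` inside the smallest rectangle
containing `ν` (the lattice points of the Ferrers diagram `F_ν`). -/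
def Anu (ν : List Bool) : Set (ℤ × ℤ) :=
  {p | ∃ k ≤ ν.length, p.1 = (ecount ν k : ℤ) ∧ (ncount ν k : ℤ) ≤ p.2 ∧ p.2 ≤ (ν.count true : ℤ)}

/-- `p` is strictly southwest of `q`. -/
def strictSW (p q : ℤ × ℤ) : Prop := p.1 < q.1 ∧ p.2 < q.2

/-- The lattice points of the smallest axis-parallel rectangle containing `p` and `q`. -/
def rectPts (p q : ℤ × ℤ) : Set (ℤ × ℤ) :=
  {z | min p.1 q.1 ≤ z.1 ∧ z.1 ≤ max p.1 q.1 ∧ min p.2 q.2 ≤ z.2 ∧ z.2 ≤ max p.2 q.2}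

/-- `p` and `q` are ν-incompatible: one is strictly southwest (equivalently, the other is
strictly northeast) of the other and the rectangle they span lies inside `F_ν`. -/
def NuIncompatible (ν : List Bool) (p q : ℤ × ℤ) : Prop :=
  (strictSW p q ∨ strictSW q p) ∧ rectPts p q ⊆ Anu ν

/-- `p` and `q` are ν-compatible. -/
def NuCompatible (ν : List Bool) (p q : ℤ × ℤ) : Prop := ¬ NuIncompatible ν p q

/-- A ν-tree: a maximal collection of pairwise ν-compatible elements of `A_ν`. -/
def IsNuTree (ν : List Bool) (T : Set (ℤ × ℤ)) : Prop :=
  T ⊆ Anu ν ∧ (∀ p ∈ T, ∀ q ∈ T, NuCompatible ν p q) ∧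
    ∀ T', T ⊆ T' → T' ⊆ Anu ν → (∀ p ∈ T', ∀ q ∈ T', NuCompatible ν p q) → T' = T

/-- In the pipe dream `P(T)`, the tile at cell `c` is an elbow iff `c` is a node of `T`
or `c` lies outside the Ferrers diagram `F_ν`; all other tiles are crossings. -/
def tileElbow (ν : List Bool) (T : Set (ℤ × ℤ)) (c : ℤ × ℤ) : Prop := c ∈ T ∨ c ∉ Anu ν

/-- One step of a pipe in the pipe dream `P(T)`.  A state `(c, d)` records the cell `c`
currently being traversed together with the heading `d` (`true` = east, `false` = north)
with which the pipe entered `c`.  An elbow turns the pipe, a crossing lets it through. -/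
noncomputable def pstep (ν : List Bool) (T : Set (ℤ × ℤ)) :
    (ℤ × ℤ) × Bool → (ℤ × ℤ) × Bool := fun s =>
  let d' : Bool := if tileElbow ν T s.1 then !s.2 else s.2
  (cond d' (s.1.1 + 1, s.1.2) (s.1.1, s.1.2 + 1), d')

/-- The trajectory of pipe `i` in `P(T)`: pipes are labeled (from `0`) from top to bottom
on the left edge, pipe `i` entering the leftmost column heading east at height
`(#north steps of ν) - i`. -/
noncomputable def ptraj (ν : List Bool) (T : Set (ℤ × ℤ)) (i : ℕ) (k : ℕ) :
    (ℤ × ℤ) × Bool :=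
  (pstep ν T)^[k] (((0 : ℤ), (ν.count true : ℤ) - (i : ℤ)), true)

/-- Pipe `i` passes above the lattice point `p` (with the Ferrers diagram shifted by
`-(ε,ε)`): the unique cell of the column of `p` that the pipe traverses heading east is
weakly above `p`. -/
def PipeAbove (ν : List Bool) (T : Set (ℤ × ℤ)) (i : ℕ) (p : ℤ × ℤ) : Prop :=
  ∃ k, (ptraj ν T i k).2 = true ∧ (ptraj ν T i k).1.1 = p.1 ∧ p.2 ≤ (ptraj ν T i k).1.2

/-- Pipe `i` passes (strictly) below the lattice point `p`. -/
def PipeBelow (ν : List Bool) (T : Set (ℤ × ℤ)) (i : ℕ) (p : ℤ × ℤ) : Prop :=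
  ∃ k, (ptraj ν T i k).2 = true ∧ (ptraj ν T i k).1.1 = p.1 ∧ (ptraj ν T i k).1.2 < p.2

/-- Pipe `i` enters the cell `c` heading east. -/
def EntersE (ν : List Bool) (T : Set (ℤ × ℤ)) (i : ℕ) (c : ℤ × ℤ) : Prop :=
  ∃ k, ptraj ν T i k = (c, true)

/-- Pipe `i` enters the cell `c` heading north. -/
def EntersN (ν : List Bool) (T : Set (ℤ × ℤ)) (i : ℕ) (c : ℤ × ℤ) : Prop :=
  ∃ k, ptraj ν T i k = (c, false)

/-- An ascent of a ν-tree `T`: a node having a node of `T` to its north and a node of `T`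
to its east. -/
def IsAscent (ν : List Bool) (T : Set (ℤ × ℤ)) (a : ℤ × ℤ) : Prop :=
  a ∈ T ∧ (∃ p ∈ T, p.1 = a.1 ∧ a.2 < p.2) ∧ (∃ r ∈ T, r.2 = a.2 ∧ a.1 < r.1)

section counting
variable (ν : List Bool)

lemma ncount_mono {k k' : ℕ} (h : k' ≤ k) : ncount ν k' ≤ ncount ν k := by
  unfold ncount
  have : ν.take k' = (ν.take k).take k' := by rw [List.take_take, min_eq_left h]
  rw [this]; exact (List.take_sublist _ _).count_le true

lemma ecount_le (k : ℕ) : ecount ν k ≤ ν.count false :=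
  (List.take_sublist _ _).count_le false

lemma ecount_succ_le (k : ℕ) : ecount ν (k + 1) ≤ ecount ν k + 1 := by
  unfold ecount
  rw [List.take_succ, List.count_append]
  have : (ν[k]?.toList).count false ≤ 1 := by
    cases h : ν[k]? <;> simp [List.count_singleton] <;> split <;> omega
  omega

lemma ecount_mono {k k' : ℕ} (h : k' ≤ k) : ecount ν k' ≤ ecount ν k := by
  unfold ecount
  have : ν.take k' = (ν.take k).take k' := by rw [List.take_take, min_eq_left h]
  rw [this]; exact (List.take_sublist _ _).count_le false

lemma exists_ecount (k m : ℕ) (h : m ≤ ecount ν k) : ∃ k' ≤ k, ecount ν k' = m := by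
  induction k with
  | zero =>
    refine ⟨0, le_rfl, ?_⟩
    simp only [ecount, List.take_zero, List.count_nil] at h ⊢
    omega
  | succ k ih =>
    by_cases h' : m ≤ ecount ν k
    · obtain ⟨k', hk', he⟩ := ih h'
      exact ⟨k', hk'.trans (Nat.le_succ k), he⟩
    · refine ⟨k + 1, le_rfl, ?_⟩
      have := ecount_succ_le ν k
      omega
end counting

section anu
variable {ν : List Bool}

lemma mem_Anu_y_le {X y Y : ℤ} (h : (X, y) ∈ Anu ν) (h1 : y ≤ Y)
    (h2 : Y ≤ (ν.count true : ℤ)) : (X, Y) ∈ Anu ν := by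
  obtain ⟨k, hk, he, hn, _⟩ := h
  exact ⟨k, hk, he, hn.trans h1, h2⟩

lemma Anu_x_nonneg {p : ℤ × ℤ} (h : p ∈ Anu ν) : 0 ≤ p.1 := by
  obtain ⟨k, _, he, _, _⟩ := h; rw [he]; positivity

lemma Anu_y_le {p : ℤ × ℤ} (h : p ∈ Anu ν) : p.2 ≤ (ν.count true : ℤ) := by
  obtain ⟨k, _, _, _, h⟩ := h; exact h

lemma Anu_x_le {p : ℤ × ℤ} (h : p ∈ Anu ν) : p.1 ≤ (ν.count false : ℤ) := by
  obtain ⟨k, _, he, _, _⟩ := h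
  rw [he]; exact_mod_cast ecount_le ν k

lemma mem_Anu_x_le {X y X' : ℤ} (h : (X, y) ∈ Anu ν) (h0 : 0 ≤ X') (h1 : X' ≤ X) :
    (X', y) ∈ Anu ν := by
  obtain ⟨k, hk, he, hn, hy⟩ := h
  have hm : X'.toNat ≤ ecount ν k := by
    have : (X'.toNat : ℤ) = X' := Int.toNat_of_nonneg h0
    omega
  obtain ⟨k', hk', he'⟩ := exists_ecount ν k X'.toNat hm
  refine ⟨k', hk'.trans hk, ?_, ?_, hy⟩
  · simp only []
    rw [he', Int.toNat_of_nonneg h0]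
  · have := ncount_mono ν hk'
    simp only []
    omega
end anu

section traj
variable {ν : List Bool} {T : Set (ℤ × ℤ)}

lemma pstep_true (c : ℤ × ℤ) :
    pstep ν T (c, true) =
      if tileElbow ν T c then ((c.1, c.2 + 1), false) else ((c.1 + 1, c.2), true) := by
  unfold pstep; split_ifs with h <;> simp [h]

lemma pstep_false (c : ℤ × ℤ) :
    pstep ν T (c, false) =
      if tileElbow ν T c then ((c.1 + 1, c.2), true) else ((c.1, c.2 + 1), false) := by
  unfold pstep; split_ifs with h <;> simp [h]

lemma ptraj_succ (q k : ℕ) : ptraj ν T q (k + 1) = pstep ν T (ptraj ν T q k) := by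
  unfold ptraj; rw [Function.iterate_succ_apply']

lemma pstep_sum (s : (ℤ × ℤ) × Bool) :
    (pstep ν T s).1.1 + (pstep ν T s).1.2 = s.1.1 + s.1.2 + 1 := by
  obtain ⟨⟨x, y⟩, d⟩ := s
  by_cases h : tileElbow ν T (x, y) <;> cases d <;>
    simp [pstep, h] <;> ring

lemma ptraj_sum (q k : ℕ) :
    (ptraj ν T q k).1.1 + (ptraj ν T q k).1.2 = (ν.count true : ℤ) - q + k := by
  induction k with
  | zero => simp [ptraj]
  | succ k ih =>
    rw [ptraj_succ, pstep_sum, ih]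
    push_cast; ring

lemma pstep_mono (s : (ℤ × ℤ) × Bool) :
    s.1.1 ≤ (pstep ν T s).1.1 ∧ s.1.2 ≤ (pstep ν T s).1.2 := by
  obtain ⟨⟨x, y⟩, d⟩ := s
  by_cases h : tileElbow ν T (x, y) <;> cases d <;>
    simp [pstep, h]

lemma ptraj_mono_x (q : ℕ) {k k' : ℕ} (h : k ≤ k') :
    (ptraj ν T q k).1.1 ≤ (ptraj ν T q k').1.1 := by
  have : Monotone fun k => (ptraj ν T q k).1.1 := by
    apply monotone_nat_of_le_succ
    intro n
    rw [ptraj_succ]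
    exact (pstep_mono _).1
  exact this h

lemma ptraj_mono_y (q : ℕ) {k k' : ℕ} (h : k ≤ k') :
    (ptraj ν T q k).1.2 ≤ (ptraj ν T q k').1.2 := by
  have : Monotone fun k => (ptraj ν T q k).1.2 := by
    apply monotone_nat_of_le_succ
    intro n
    rw [ptraj_succ]
    exact (pstep_mono _).2
  exact this h

lemma ptraj_time_unique {q k1 k2 : ℕ} {c : ℤ × ℤ} {d1 d2 : Bool}
    (h1 : ptraj ν T q k1 = (c, d1)) (h2 : ptraj ν T q k2 = (c, d2)) : k1 = k2 := by
  have s1 := ptraj_sum (ν := ν) (T := T) q k1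
  have s2 := ptraj_sum (ν := ν) (T := T) q k2
  rw [h1] at s1; rw [h2] at s2
  dsimp only at s1 s2
  have : (k1 : ℤ) = k2 := by omega
  exact_mod_cast this

end traj

section master
variable {ν : List Bool} {T : Set (ℤ × ℤ)}

lemma Anu_y_nonneg {p : ℤ × ℤ} (h : p ∈ Anu ν) : 0 ≤ p.2 := by
  obtain ⟨k, _, _, hn, _⟩ := h
  have : (0 : ℤ) ≤ (ncount ν k : ℤ) := by positivity
  omega

lemma incompat_of (hT : IsNuTree ν T) {a d : ℤ × ℤ} (haT : a ∈ T) (hdT : d ∈ T)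
    (h1 : a.1 < d.1) (h2 : a.2 < d.2) (hSE : ((d.1, a.2) : ℤ × ℤ) ∈ Anu ν) : False := by
  apply hT.2.1 a haT d hdT
  refine ⟨Or.inl ⟨h1, h2⟩, ?_⟩
  rintro ⟨zx, zy⟩ ⟨hz1, hz2, hz3, hz4⟩
  rw [inf_eq_left.mpr h1.le] at hz1
  rw [sup_eq_right.mpr h1.le] at hz2
  rw [inf_eq_left.mpr h2.le] at hz3
  rw [sup_eq_right.mpr h2.le] at hz4
  have ha0 : 0 ≤ a.1 := Anu_x_nonneg (hT.1 haT)
  have h5 : ((zx, a.2) : ℤ × ℤ) ∈ Anu ν :=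
    mem_Anu_x_le hSE (le_trans ha0 hz1) hz2
  exact mem_Anu_y_le h5 hz3 (le_trans hz4 (Anu_y_le (hT.1 hdT)))

lemma after_ascentN (hT : IsNuTree ν T) {a : ℤ × ℤ} {q k2 : ℕ}
    (ha : IsAscent ν T a) (h2 : ptraj ν T q k2 = (a, false)) :
    (∀ k, k2 < k → ∀ b ∈ T, ptraj ν T q k = (b, true) → b.2 = a.2 ∧ a.1 < b.1) ∧
    (∀ k, k2 < k → ∀ b ∈ T, ptraj ν T q k ≠ (b, false)) := by
  obtain ⟨haT, -, ⟨r, hrT, hry, hrx⟩⟩ := ha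
  have haA : a ∈ Anu ν := hT.1 haT
  have ha0 : 0 ≤ a.1 := Anu_x_nonneg haA
  have hay0 : 0 ≤ a.2 := Anu_y_nonneg haA
  -- the first elbow strictly east of a in the row of a
  have hPex : ∃ t : ℕ, 1 ≤ t ∧ tileElbow ν T (a.1 + (t : ℤ), a.2) := by
    refine ⟨ν.count false + 1, by omega, Or.inr fun hmem => ?_⟩
    have := Anu_x_le hmem
    dsimp at this
    push_cast at this
    omega
  set m := Nat.find hPex with hmdef
  have hmspec := Nat.find_spec hPex
  have hm1 : 1 ≤ m := hmspec.1
  have hmE : tileElbow ν T (a.1 + (m : ℤ), a.2) := hmspec.2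
  have hmmin : ∀ t, t < m → ¬(1 ≤ t ∧ tileElbow ν T (a.1 + (t : ℤ), a.2)) :=
    fun t ht => Nat.find_min hPex ht
  -- east run
  have run1 : ∀ t, 1 ≤ t → t ≤ m →
      ptraj ν T q (k2 + t) = ((a.1 + (t : ℤ), a.2), true) := by
    intro t
    induction t with
    | zero => omega
    | succ t ih =>
      intro _ h2t
      by_cases ht : t = 0
      · subst ht
        rw [ptraj_succ, h2, pstep_false, if_pos (show tileElbow ν T a from Or.inl haT)]
        norm_num
      · have ih' := ih (by omega) (by omega)
        have hne : ¬ tileElbow ν T (a.1 + (t : ℤ), a.2) := fun hE =>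
          hmmin t (by omega) ⟨by omega, hE⟩
        rw [show k2 + (t + 1) = (k2 + t) + 1 from rfl, ptraj_succ, ih', pstep_true,
          if_neg hne]
        simp only [Prod.mk.injEq, and_true]
        push_cast; ring
  -- the elbow east of a is a node of T
  have hrm : a.1 + (m : ℤ) ≤ r.1 := by
    by_contra hlt
    push_neg at hlt
    have htZ : ((r.1 - a.1).toNat : ℤ) = r.1 - a.1 := Int.toNat_of_nonneg (by omega)
    refine hmmin (r.1 - a.1).toNat (by omega) ⟨by omega, Or.inl ?_⟩
    have : ((a.1 + ((r.1 - a.1).toNat : ℤ), a.2) : ℤ × ℤ) = r := by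
      rw [Prod.ext_iff]
      constructor
      · dsimp; omega
      · dsimp; omega
    rw [this]
    exact hrT
  have hrA : ((r.1, a.2) : ℤ × ℤ) ∈ Anu ν := by
    rw [← hry, Prod.mk.eta]
    exact hT.1 hrT
  have hcA : ((a.1 + (m : ℤ), a.2) : ℤ × ℤ) ∈ Anu ν :=
    mem_Anu_x_le hrA (by omega) hrm
  have hcT : ((a.1 + (m : ℤ), a.2) : ℤ × ℤ) ∈ T := by
    rcases hmE with h | h
    · exact h
    · exact absurd hcA h
  -- step turning north at the node east of a
  have hstep2 : ptraj ν T q (k2 + m + 1) = ((a.1 + (m : ℤ), a.2 + 1), false) := by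
    rw [ptraj_succ, run1 m hm1 le_rfl, pstep_true, if_pos hmE]
  -- the first elbow north of that node
  have hQex : ∃ t : ℕ, 1 ≤ t ∧ tileElbow ν T (a.1 + (m : ℤ), a.2 + (t : ℤ)) := by
    refine ⟨ν.count true + 1, by omega, Or.inr fun hmem => ?_⟩
    have := Anu_y_le hmem
    dsimp at this
    push_cast at this
    omega
  set m2 := Nat.find hQex with hm2def
  have hm2spec := Nat.find_spec hQex
  have hm21 : 1 ≤ m2 := hm2spec.1
  have hm2E : tileElbow ν T (a.1 + (m : ℤ), a.2 + (m2 : ℤ)) := hm2spec.2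
  have hm2min : ∀ t, t < m2 → ¬(1 ≤ t ∧ tileElbow ν T (a.1 + (m : ℤ), a.2 + (t : ℤ))) :=
    fun t ht => Nat.find_min hQex ht
  -- north run
  have run2 : ∀ t, 1 ≤ t → t ≤ m2 →
      ptraj ν T q (k2 + m + t) = ((a.1 + (m : ℤ), a.2 + (t : ℤ)), false) := by
    intro t
    induction t with
    | zero => omega
    | succ t ih =>
      intro _ h2t
      by_cases ht : t = 0
      · subst ht
        rw [show k2 + m + 1 = k2 + m + 1 from rfl]
        rw [hstep2]
        norm_num
      · have ih' := ih (by omega) (by omega)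
        have hne : ¬ tileElbow ν T (a.1 + (m : ℤ), a.2 + (t : ℤ)) := fun hE =>
          hm2min t (by omega) ⟨by omega, hE⟩
        rw [show k2 + m + (t + 1) = (k2 + m + t) + 1 from rfl, ptraj_succ, ih',
          pstep_false, if_neg hne]
        simp only [Prod.mk.injEq, and_true, true_and]
        push_cast; ring
  -- the north elbow is above the top of the diagram
  have hdtop : (ν.count true : ℤ) < a.2 + (m2 : ℤ) := by
    by_contra hle
    push_neg at hle
    have hdA : ((a.1 + (m : ℤ), a.2 + (m2 : ℤ)) : ℤ × ℤ) ∈ Anu ν :=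
      mem_Anu_y_le hcA (by omega) hle
    have hdT : ((a.1 + (m : ℤ), a.2 + (m2 : ℤ)) : ℤ × ℤ) ∈ T := by
      rcases hm2E with h | h
      · exact h
      · exact absurd hdA h
    exact incompat_of hT haT hdT (by dsimp; omega) (by dsimp; omega) hcA
  -- after the north elbow the pipe stays above the diagram
  have tail : ∀ k, k2 + m + m2 ≤ k → (ν.count true : ℤ) < (ptraj ν T q k).1.2 := by
    intro k hk
    have hmono := ptraj_mono_y (ν := ν) (T := T) q hk
    rw [run2 m2 hm21 le_rfl] at hmono
    dsimp at hmono
    omega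
  constructor
  · intro k hk b hbT hbk
    obtain ⟨t, rfl⟩ : ∃ t, k = k2 + t := ⟨k - k2, by omega⟩
    have ht1 : 1 ≤ t := by omega
    by_cases htm : t ≤ m
    · have hr1 := run1 t ht1 htm
      rw [hbk] at hr1
      rw [Prod.ext_iff] at hr1
      have hb : b = (a.1 + (t : ℤ), a.2) := hr1.1
      rcases eq_or_lt_of_le htm with he | hlt
      · subst he
        rw [hb]
        exact ⟨rfl, by dsimp; omega⟩
      · exact absurd ⟨ht1, Or.inl (hb ▸ hbT)⟩ (hmmin t hlt)
    · push_neg at htm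
      by_cases htm2 : t ≤ m + m2
      · exfalso
        have hr2 := run2 (t - m) (by omega) (by omega)
        rw [show k2 + m + (t - m) = k2 + t from by omega, hbk, Prod.ext_iff] at hr2
        exact absurd hr2.2 (by simp)
      · exfalso
        have htail := tail (k2 + t) (by omega)
        rw [hbk] at htail
        dsimp at htail
        have := Anu_y_le (hT.1 hbT)
        omega
  · intro k hk b hbT hbk
    obtain ⟨t, rfl⟩ : ∃ t, k = k2 + t := ⟨k - k2, by omega⟩
    have ht1 : 1 ≤ t := by omega
    by_cases htm : t ≤ m
    · have hr1 := run1 t ht1 htm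
      rw [hbk, Prod.ext_iff] at hr1
      exact absurd hr1.2 (by simp)
    · push_neg at htm
      by_cases htm2 : t ≤ m + m2
      · have hr2 := run2 (t - m) (by omega) (by omega)
        rw [show k2 + m + (t - m) = k2 + t from by omega, hbk, Prod.ext_iff] at hr2
        have hb : b = (a.1 + (m : ℤ), a.2 + ((t - m : ℕ) : ℤ)) := hr2.1
        rcases eq_or_lt_of_le htm2 with he | hlt
        · -- t - m = m2 : b is above the diagram, but b ∈ T
          have hbm2 : (t - m : ℕ) = m2 := by omega
          have := Anu_y_le (hT.1 hbT)
          rw [hb] at this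
          dsimp at this
          rw [hbm2] at this
          omega
        · exact absurd ⟨by omega, Or.inl (hb ▸ hbT)⟩ (hm2min (t - m) (by omega))
      · have htail := tail (k2 + t) (by omega)
        rw [hbk] at htail
        dsimp at htail
        have := Anu_y_le (hT.1 hbT)
        omega

end master

section final
variable {ν : List Bool} {T : Set (ℤ × ℤ)}

lemma entersN_inj (hT : IsNuTree ν T) {a b : ℤ × ℤ} {q : ℕ}
    (ha : IsAscent ν T a) (hb : IsAscent ν T b)
    (hqa : EntersN ν T q a) (hqb : EntersN ν T q b) : a = b := by
  obtain ⟨k2, hk2⟩ := hqa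
  obtain ⟨k2', hk2'⟩ := hqb
  rcases lt_trichotomy k2 k2' with h | h | h
  · exact absurd hk2' ((after_ascentN hT ha hk2).2 k2' h b hb.1)
  · subst h
    have h3 := hk2.symm.trans hk2'
    simpa using h3
  · exact absurd hk2 ((after_ascentN hT hb hk2').2 k2 h a ha.1)

lemma not_entersE_and_N_self {q : ℕ} {a : ℤ × ℤ}
    (hE : EntersE ν T q a) (hN : EntersN ν T q a) : False := by
  obtain ⟨k1, h1⟩ := hE
  obtain ⟨k2, h2⟩ := hN
  have hk := ptraj_time_unique h1 h2
  subst hk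
  have := h1.symm.trans h2
  simpa using this

lemma key_dichotomy (hT : IsNuTree ν T) {a b : ℤ × ℤ} {q : ℕ}
    (ha : IsAscent ν T a) (hb : IsAscent ν T b)
    (hqa : EntersN ν T q a) (hqb : EntersE ν T q b) :
    (b.2 = a.2 ∧ a.1 < b.1) ∨ (b.2 < a.2 ∧ b.1 ≤ a.1) := by
  obtain ⟨k2, hk2⟩ := hqa
  obtain ⟨k1, hk1⟩ := hqb
  rcases lt_trichotomy k2 k1 with h | h | h
  · exact Or.inl ((after_ascentN hT ha hk2).1 k1 h b hb.1 hk1)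
  · subst h
    have h3 := hk2.symm.trans hk1
    simpa using h3
  · right
    have hx := ptraj_mono_x (ν := ν) (T := T) q h.le
    rw [hk1, hk2] at hx
    dsimp at hx
    have hstep : ptraj ν T q (k1 + 1) = ((b.1, b.2 + 1), false) := by
      rw [ptraj_succ, hk1, pstep_true, if_pos (show tileElbow ν T b from Or.inl hb.1)]
    have hy := ptraj_mono_y (ν := ν) (T := T) q (show k1 + 1 ≤ k2 from h)
    rw [hstep, hk2] at hy
    dsimp at hy
    exact ⟨by omega, hx⟩

end final

theorem ascent_roots_linearIndependent' (ν : List Bool) (T : Set (ℤ × ℤ))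
    (hT : IsNuTree ν T) (N : ℕ) (A : Set (ℤ × ℤ)) (hAT : A ⊆ T)
    (hAsc : ∀ a ∈ A, IsAscent ν T a)
    (ρ : A → (Fin N → ℝ))
    (hρ : ∀ a : A, ∃ i j : Fin N, EntersE ν T (i : ℕ) a ∧ EntersN ν T (j : ℕ) a ∧
      ρ a = Pi.single i (1 : ℝ) - Pi.single j 1) :
    LinearIndependent ℝ ρ := by
  choose I J hIE hJN hρeq using hρ
  rw [linearIndependent_iff']
  intro s g hsum a0 ha0s
  by_contra hg0
  set supp := s.filter (fun b => g b ≠ 0) with hsuppdef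
  have hsupp_ne : supp.Nonempty := ⟨a0, by simp [hsuppdef, ha0s, hg0]⟩
  obtain ⟨amin, haminsupp, hamin⟩ :=
    supp.exists_min_image (fun b => toLex ((b : ℤ × ℤ).2, -(b : ℤ × ℤ).1)) hsupp_ne
  have haminS : amin ∈ s := (Finset.mem_filter.mp haminsupp).1
  have hgamin : g amin ≠ 0 := (Finset.mem_filter.mp haminsupp).2
  have hcoord : ∑ b ∈ s, g b * (ρ b (J amin)) = 0 := by
    have := congrFun hsum (J amin)
    rw [Finset.sum_apply] at this
    simpa using this
  have hterm : ∀ b : A, g b * (ρ b (J amin)) =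
      (if J amin = I b then g b else 0) - (if J amin = J b then g b else 0) := by
    intro b
    rw [hρeq b]
    simp only [Pi.sub_apply, Pi.single_apply]
    split_ifs <;> ring
  rw [Finset.sum_congr rfl (fun b _ => hterm b), Finset.sum_sub_distrib] at hcoord
  have hsecond : ∑ b ∈ s, (if J amin = J b then g b else 0) = g amin := by
    refine Eq.trans (Finset.sum_eq_single_of_mem amin haminS ?_) (if_pos rfl)
    intro b hbs hbne
    rw [if_neg]
    intro hJ
    apply hbne
    apply Subtype.ext
    refine entersN_inj hT (hAsc _ b.2) (hAsc _ amin.2) (hJN b) ?_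
    have h5 := hJN amin
    rwa [hJ] at h5
  rw [hsecond, sub_eq_zero] at hcoord
  have hex : ∃ b ∈ s, (if J amin = I b then g b else 0) ≠ 0 := by
    by_contra hall
    push_neg at hall
    rw [Finset.sum_eq_zero hall] at hcoord
    exact hgamin hcoord.symm
  obtain ⟨b, hbs, hbne0⟩ := hex
  have hJI : J amin = I b := by
    by_contra h
    rw [if_neg h] at hbne0
    exact hbne0 rfl
  have hgb : g b ≠ 0 := by rwa [if_pos hJI] at hbne0
  have hbsupp : b ∈ supp := Finset.mem_filter.mpr ⟨hbs, hgb⟩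
  have hEb : EntersE ν T ((J amin : ℕ)) (b : ℤ × ℤ) := by
    have := hIE b
    rwa [← hJI] at this
  have hNa : EntersN ν T ((J amin : ℕ)) (amin : ℤ × ℤ) := hJN amin
  by_cases hba : (b : ℤ × ℤ) = (amin : ℤ × ℤ)
  · exact not_entersE_and_N_self (hba ▸ hEb) hNa
  · rcases key_dichotomy hT (hAsc _ amin.2) (hAsc _ b.2) hNa hEb with ⟨h1, h2⟩ | ⟨h1, h2⟩
    · refine absurd ?_ (not_lt.mpr (hamin b hbsupp))
      rw [Prod.Lex.lt_iff]
      right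
      refine ⟨h1, ?_⟩
      show -(b : ℤ × ℤ).1 < -(amin : ℤ × ℤ).1
      omega
    · refine absurd ?_ (not_lt.mpr (hamin b hbsupp))
      rw [Prod.Lex.lt_iff]
      left
      exact h1

/-- for a ν-tree `T` and a set `A ⊆ T` of ascents of `T`, the roots
`r(T,a) = e_i - e_j` (where `i`, `j` are the two pipes forming the elbow of `P(T)` at
`a`) for `a ∈ A` are linearly independent in `ℝ^N`. -/
theorem ascent_roots_linearIndependent (ν : List Bool) (T : Set (ℤ × ℤ))
    (hT : IsNuTree ν T) (N : ℕ) (A : Set (ℤ × ℤ)) (hAT : A ⊆ T)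
    (hAsc : ∀ a ∈ A, IsAscent ν T a)
    (ρ : A → (Fin N → ℝ))
    (hρ : ∀ a : A, ∃ i j : Fin N, EntersE ν T (i : ℕ) a ∧ EntersN ν T (j : ℕ) a ∧
      ρ a = Pi.single i (1 : ℝ) - Pi.single j 1) :
    LinearIndependent ℝ ρ :=
  ascent_roots_linearIndependent' ν T hT N A hAT hAsc ρ hρ
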